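/- Let X be an n×p real matrix with columns x_1,…,x_p, let ξ > 0, λ₁ > 0, s > 0, and 0 < c_*. Let Σ̂ be the p×p matrix with entries Σ̂_{jk} = (x_j^T x_k/n) · 1{ |x_j^T x_k/n| ≥ λ₁ } (the thresholded Gram matrix). Suppose the smallest eigenvalue of Σ̂ is at least c_* and s λ₁ (1 + ξ)² ≤ c_*/2. Then for every S ⊆ {1,…,p} with 1 ≤ |S| ≤ s, the compatibility factor satisfies κ²(ξ, S) ≥ c_*/2. -/

import Mathlib

open Finset

/-- lower bound on the compatibility factor via the thresholded Gram matrix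
(first part of Proposition 2).  The conclusion `κ²(ξ,S) ≥ c_*/2` is stated pointwise over
the cone `C(ξ,S)`, which is equivalent to the infimum formulation. -/
theorem compatibility_from_thresholded_gram
    (n p : ℕ) (hn : 0 < n)
    (X : Matrix (Fin n) (Fin p) ℝ)
    (ξ lam₁ s cstar : ℝ) (hξ : 0 < ξ) (hlam₁ : 0 < lam₁) (hs : 0 < s) (hcstar : 0 < cstar)
    (Sighat : Matrix (Fin p) (Fin p) ℝ)
    (hSighat : ∀ j k : Fin p, Sighat j k =
      if lam₁ ≤ |(∑ i, X i j * X i k) / n| then (∑ i, X i j * X i k) / n else 0)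
    (heig : ∀ u : Fin p → ℝ, cstar * (∑ j, (u j) ^ 2) ≤ ∑ j, ∑ k, u j * Sighat j k * u k)
    (hcond : s * lam₁ * (1 + ξ) ^ 2 ≤ cstar / 2)
    (S : Finset (Fin p)) (hS : S.Nonempty) (hScard : (S.card : ℝ) ≤ s)
    (u : Fin p → ℝ)
    (hcone : (∑ k ∈ Sᶜ, |u k|) ≤ ξ * ∑ k ∈ S, |u k|)
    (huS : (∑ k ∈ S, |u k|) ≠ 0) :
    cstar / 2 ≤ (∑ i, (∑ k, X i k * u k) ^ 2) * S.card / (n * (∑ k ∈ S, |u k|) ^ 2) := by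
  set a : ℝ := ∑ k ∈ S, |u k| with ha
  have ha0 : 0 < a :=
    lt_of_le_of_ne (Finset.sum_nonneg fun k _ => abs_nonneg _) (Ne.symm huS)
  have hn' : (0:ℝ) < n := by exact_mod_cast hn
  set T : ℝ := ∑ i, (∑ k, X i k * u k) ^ 2 with hT
  have hTnn : 0 ≤ T := Finset.sum_nonneg fun i _ => sq_nonneg _
  -- the Gram quadratic form equals ‖Xu‖²/n
  have key : ∑ j, ∑ k, u j * (∑ i, X i j * X i k) * u k = T := by
    have h1 : ∀ j k : Fin p, u j * (∑ i, X i j * X i k) * u k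
        = ∑ i, (X i j * u j) * (X i k * u k) := by
      intro j k
      rw [Finset.mul_sum, Finset.sum_mul]
      exact Finset.sum_congr rfl fun i _ => by ring
    calc ∑ j, ∑ k, u j * (∑ i, X i j * X i k) * u k
        = ∑ j, ∑ k, ∑ i, (X i j * u j) * (X i k * u k) :=
          Finset.sum_congr rfl fun j _ => Finset.sum_congr rfl fun k _ => h1 j k
      _ = ∑ j, ∑ i, ∑ k, (X i j * u j) * (X i k * u k) :=
          Finset.sum_congr rfl fun j _ => Finset.sum_comm
      _ = ∑ i, ∑ j, ∑ k, (X i j * u j) * (X i k * u k) := Finset.sum_comm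
      _ = ∑ i, (∑ j, X i j * u j) * (∑ k, X i k * u k) := by
          refine Finset.sum_congr rfl fun i _ => ?_
          rw [Finset.sum_mul_sum]
      _ = T := by
          refine Finset.sum_congr rfl fun i _ => ?_
          rw [sq]
  have hgram : ∑ j, ∑ k, u j * ((∑ i, X i j * X i k) / n) * u k = T / n := by
    rw [← key, Finset.sum_div]
    refine Finset.sum_congr rfl fun j _ => ?_
    rw [Finset.sum_div]
    refine Finset.sum_congr rfl fun k _ => ?_
    ring
  -- entrywise closeness of Sighat to the Gram matrix
  have hclose : ∀ j k : Fin p, |Sighat j k - (∑ i, X i j * X i k) / n| ≤ lam₁ := by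
    intro j k
    rw [hSighat j k]
    split
    · simpa using hlam₁.le
    · rw [zero_sub, abs_neg]
      linarith [not_le.mp (by assumption)]
  -- bound on the perturbation term
  have hpert : ∑ j, ∑ k, u j * Sighat j k * u k
      ≤ T / n + lam₁ * (∑ j, |u j|) ^ 2 := by
    have h1 : ∑ j, ∑ k, u j * Sighat j k * u k
        - ∑ j, ∑ k, u j * ((∑ i, X i j * X i k) / n) * u k
        = ∑ j, ∑ k, u j * (Sighat j k - (∑ i, X i j * X i k) / n) * u k := by
      rw [← Finset.sum_sub_distrib]
      refine Finset.sum_congr rfl fun j _ => ?_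
      rw [← Finset.sum_sub_distrib]
      refine Finset.sum_congr rfl fun k _ => ?_
      ring
    have h2 : ∑ j, ∑ k, u j * (Sighat j k - (∑ i, X i j * X i k) / n) * u k
        ≤ lam₁ * (∑ j, |u j|) ^ 2 := by
      have heq : lam₁ * (∑ j, |u j|) ^ 2 = ∑ j : Fin p, ∑ k : Fin p, |u j| * lam₁ * |u k| := by
        rw [sq, Finset.sum_mul_sum, Finset.mul_sum]
        refine Finset.sum_congr rfl fun j _ => ?_
        rw [Finset.mul_sum]
        refine Finset.sum_congr rfl fun k _ => ?_
        ring
      rw [heq]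
      refine Finset.sum_le_sum fun j _ => Finset.sum_le_sum fun k _ => ?_
      calc u j * (Sighat j k - (∑ i, X i j * X i k) / n) * u k
          ≤ |u j * (Sighat j k - (∑ i, X i j * X i k) / n) * u k| := le_abs_self _
        _ = |u j| * |Sighat j k - (∑ i, X i j * X i k) / n| * |u k| := by
            rw [abs_mul, abs_mul]
        _ ≤ |u j| * lam₁ * |u k| :=
            mul_le_mul_of_nonneg_right
              (mul_le_mul_of_nonneg_left (hclose j k) (abs_nonneg _)) (abs_nonneg _)
    rw [hgram] at h1
    linarith
  -- ℓ1 bound via the cone condition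
  have hl1 : (∑ j, |u j|) ≤ (1 + ξ) * a := by
    have hsplit := Finset.sum_add_sum_compl S fun k => |u k|
    nlinarith [hsplit, hcone]
  have hl1nn : (0:ℝ) ≤ ∑ j, |u j| := Finset.sum_nonneg fun j _ => abs_nonneg _
  set Q : ℝ := ∑ j, (u j) ^ 2 with hQ
  have hQnn : 0 ≤ Q := Finset.sum_nonneg fun j _ => sq_nonneg _
  -- Cauchy–Schwarz: a² ≤ |S| Q
  have hcs : a ^ 2 ≤ (S.card : ℝ) * Q := by
    have h1 : (∑ k ∈ S, (1:ℝ) * |u k|) ^ 2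
        ≤ (∑ k ∈ S, (1:ℝ) ^ 2) * ∑ k ∈ S, |u k| ^ 2 :=
      Finset.sum_mul_sq_le_sq_mul_sq S (fun _ => (1:ℝ)) (fun k => |u k|)
    have h2 : (∑ _k ∈ S, (1:ℝ) ^ 2) = (S.card : ℝ) := by simp
    have h3 : ∑ k ∈ S, |u k| ^ 2 ≤ Q := by
      rw [hQ]
      simp only [sq_abs]
      exact Finset.sum_le_sum_of_subset_of_nonneg (Finset.subset_univ S)
        fun j _ _ => sq_nonneg _
    have h4 : a ^ 2 ≤ (S.card : ℝ) * ∑ k ∈ S, |u k| ^ 2 := by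
      rw [ha]
      calc (∑ k ∈ S, |u k|) ^ 2 = (∑ k ∈ S, (1:ℝ) * |u k|) ^ 2 := by simp
        _ ≤ (∑ k ∈ S, (1:ℝ) ^ 2) * ∑ k ∈ S, |u k| ^ 2 := h1
        _ = (S.card : ℝ) * ∑ k ∈ S, |u k| ^ 2 := by rw [h2]
    calc a ^ 2 ≤ (S.card : ℝ) * ∑ k ∈ S, |u k| ^ 2 := h4
      _ ≤ (S.card : ℝ) * Q := mul_le_mul_of_nonneg_left h3 (Nat.cast_nonneg _)
  have hcard0 : (0:ℝ) < S.card := by exact_mod_cast Finset.card_pos.mpr hS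
  -- combine: c* Q ≤ T/n + λ₁ (1+ξ)² a²
  have hmain : cstar * Q ≤ T / n + lam₁ * ((1 + ξ) * a) ^ 2 := by
    have h1 := heig u
    have h2 : (∑ j, |u j|) ^ 2 ≤ ((1 + ξ) * a) ^ 2 := by nlinarith
    have h3 : lam₁ * (∑ j, |u j|) ^ 2 ≤ lam₁ * ((1 + ξ) * a) ^ 2 :=
      mul_le_mul_of_nonneg_left h2 hlam₁.le
    calc cstar * Q ≤ ∑ j, ∑ k, u j * Sighat j k * u k := h1
      _ ≤ T / n + lam₁ * (∑ j, |u j|) ^ 2 := hpert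
      _ ≤ T / n + lam₁ * ((1 + ξ) * a) ^ 2 := by linarith
  -- λ₁ (1+ξ)² a² ≤ (c*/2) Q
  have hsmall : lam₁ * ((1 + ξ) * a) ^ 2 ≤ (cstar / 2) * Q := by
    have e1 : lam₁ * ((1 + ξ) * a) ^ 2 = lam₁ * (1 + ξ) ^ 2 * a ^ 2 := by ring
    have h1 : lam₁ * (1 + ξ) ^ 2 * a ^ 2 ≤ lam₁ * (1 + ξ) ^ 2 * ((S.card : ℝ) * Q) :=
      mul_le_mul_of_nonneg_left hcs (by positivity)
    have h2 : lam₁ * (1 + ξ) ^ 2 * ((S.card : ℝ) * Q) ≤ s * lam₁ * (1 + ξ) ^ 2 * Q := by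
      have := mul_le_mul_of_nonneg_right hScard
        (mul_nonneg (mul_nonneg hlam₁.le (sq_nonneg (1+ξ))) hQnn)
      nlinarith
    have h3 : s * lam₁ * (1 + ξ) ^ 2 * Q ≤ (cstar / 2) * Q :=
      mul_le_mul_of_nonneg_right hcond hQnn
    linarith [e1 ▸ h1]
  have hfin : (cstar / 2) * Q ≤ T / n := by linarith
  rw [le_div_iff₀ (by positivity)]
  have hTn : (cstar / 2) * Q * n ≤ T := (le_div_iff₀ hn').mp hfin
  have h5 : (cstar / 2) * (n * a ^ 2) ≤ (cstar / 2) * (n * ((S.card : ℝ) * Q)) :=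
    mul_le_mul_of_nonneg_left
      (mul_le_mul_of_nonneg_left hcs hn'.le) (by linarith : (0:ℝ) ≤ cstar / 2)
  have h6 : (cstar / 2) * (n * ((S.card : ℝ) * Q)) ≤ T * S.card := by
    have h := mul_le_mul_of_nonneg_right hTn hcard0.le
    calc (cstar / 2) * (n * ((S.card : ℝ) * Q))
        = cstar / 2 * Q * n * (S.card : ℝ) := by ring
      _ ≤ T * S.card := h
  linarith
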